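/- With visibility φ = 1, in the semi-synchronous model, for any protocol solving exploration with 2 ≤ k < n starting from a single 1.block, the rules R_in (0(1)1 :: move toward occupied neighbor) and R_swp (1(1)1 :: move either direction) cannot both be part of the protocol: if both are included, the adversary can produce, from the initial single 1.block of size k, a configuration indistinguishable from the initial one in one step. -/

import Mathlib

/-- Rotation of a ring configuration by `i`. -/
def rotate {n : ℕ} (γ : ZMod n → ℕ) (i : ZMod n) : ZMod n → ℕ := fun j => γ (j + i)

/-- Mirror image of a ring configuration. -/
def mirror {n : ℕ} (γ : ZMod n → ℕ) : ZMod n → ℕ := fun j => γ (-j)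

/-- Two configurations are indistinguishable if one is a rotation of the other,
or a rotation of the other's mirror. -/
def Indist {n : ℕ} (γ γ' : ZMod n → ℕ) : Prop :=
  ∃ i, γ' = rotate γ i ∨ γ' = rotate (mirror γ) i

/-- A deterministic protocol for myopic robots with visibility `φ = 1`: given the view
`(a, b, c)` (multiplicities of the left neighbor, own node, right neighbor), `moves a b c d`
holds if a robot with this view may move in direction `d` (`true` = toward the `c` side).
Since the ring is unoriented, the rule set must be invariant under reversing the view. -/
structure Protocol1 where
  moves : ℕ → ℕ → ℕ → Bool → Prop
  rev : ∀ a b c d, moves a b c d ↔ moves c b a (!d)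

/-- A robot (on an occupied node `j`) is enabled if some move is allowed by its view. -/
def enabled {n : ℕ} (P : Protocol1) (γ : ZMod n → ℕ) (j : ZMod n) : Prop :=
  0 < γ j ∧ ∃ d, P.moves (γ (j - 1)) (γ j) (γ (j + 1)) d

/-- Semi-synchronous step: the adversary activates a nonempty set of robots
(`L j`/`R j` robots of node `j` move left/right, as allowed by the protocol). -/
def SStep {n : ℕ} (P : Protocol1) (γ δ : ZMod n → ℕ) : Prop :=
  ∃ L R : ZMod n → ℕ,
    (∀ j, L j + R j ≤ γ j) ∧ (∃ j, 0 < L j + R j) ∧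
    (∀ j, 0 < L j → P.moves (γ (j - 1)) (γ j) (γ (j + 1)) false) ∧
    (∀ j, 0 < R j → P.moves (γ (j - 1)) (γ j) (γ (j + 1)) true) ∧
    (∀ j, δ j = γ j - (L j + R j) + L (j + 1) + R (j - 1))

/-- Fully synchronous step: every enabled robot moves, in a direction allowed by its rule. -/
def FStep {n : ℕ} (P : Protocol1) (γ δ : ZMod n → ℕ) : Prop :=
  ∃ L R : ZMod n → ℕ,
    (∀ j, (enabled P γ j → L j + R j = γ j) ∧ (¬ enabled P γ j → L j + R j = 0)) ∧
    (∀ j, 0 < L j → P.moves (γ (j - 1)) (γ j) (γ (j + 1)) false) ∧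
    (∀ j, 0 < R j → P.moves (γ (j - 1)) (γ j) (γ (j + 1)) true) ∧
    (∀ j, δ j = γ j - (L j + R j) + L (j + 1) + R (j - 1))

/-- A configuration is terminal when no robot is enabled. -/
def Terminal1 {n : ℕ} (P : Protocol1) (γ : ZMod n → ℕ) : Prop := ∀ j, ¬ enabled P γ j

/-- With visibility `φ = 1`, if a protocol contains both the rule
`R_in` (view `0(1)1`, move toward the occupied neighbor) and the rule `R_swp`
(view `1(1)1`, move in either direction), then from the initial configuration consisting
of a single 1.block of `k` consecutive occupied nodes (`2 ≤ k < n`), the semi-synchronous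
adversary can perform one step reaching a configuration indistinguishable from the initial
one; hence (by the no-revisit theorem) the two rules cannot both be part of an
exploration protocol. -/
theorem rin_rswp_mutually_exclusive (n k : ℕ) [NeZero n] (hk2 : 2 ≤ k) (hkn : k < n)
    (P : Protocol1)
    (hin : P.moves 0 1 1 true)
    (hswp : P.moves 1 1 1 true) :
    ∃ δ : ZMod n → ℕ,
      SStep P (fun j : ZMod n => if j.val < k then 1 else 0) δ ∧
      Indist (fun j : ZMod n => if j.val < k then 1 else 0) δ := by
  have hn3 : 3 ≤ n := lt_of_le_of_lt hk2 hkn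
  haveI : Fact (1 < n) := ⟨by omega⟩
  set γ : ZMod n → ℕ := fun j : ZMod n => if j.val < k then 1 else 0 with hγ
  have hv0 : (0 : ZMod n).val = 0 := ZMod.val_zero
  have hv1 : (1 : ZMod n).val = 1 := ZMod.val_one n
  have hv2 : (2 : ZMod n).val = 2 := by
    have : ((2 : ℕ) : ZMod n).val = 2 % n := ZMod.val_natCast n 2
    simpa [Nat.mod_eq_of_lt (by omega : 2 < n)] using this
  have hvm1 : (-1 : ZMod n).val = n - 1 := by
    obtain ⟨m, rfl⟩ : ∃ m, n = m + 1 := ⟨n - 1, by omega⟩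
    simp [ZMod.val_neg_one m]
  have h10 : (1 : ZMod n) ≠ 0 := by
    intro h; have := congrArg ZMod.val h; rw [hv1, hv0] at this; omega
  have h21 : (2 : ZMod n) ≠ 1 := by
    intro h; have := congrArg ZMod.val h; rw [hv2, hv1] at this; omega
  have hm10 : (-1 : ZMod n) ≠ 0 := by
    intro h; have := congrArg ZMod.val h; rw [hvm1, hv0] at this; omega
  have hγ0 : γ 0 = 1 := by simp [hγ, hv0]; omega
  have hγ1 : γ 1 = 1 := by simp [hγ, hv1]; omega
  have hγm1 : γ (-1) = 0 := by simp [hγ, hvm1]; omega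
  refine ⟨γ, ⟨fun j => if j = 1 then 1 else 0, fun j => if j = 0 then 1 else 0,
    ?_, ⟨0, by simp⟩, ?_, ?_, ?_⟩, 0, Or.inl (funext fun j => by simp [rotate])⟩
  · intro j
    by_cases hj0 : j = 0
    · simp [hj0, h10.symm, hγ0]
    · by_cases hj1 : j = 1
      · simp [hj1, h10, hγ1]
      · simp [hj0, hj1]
  · intro j hj
    have hj1 : j = 1 := by by_contra h; simp [h] at hj
    subst hj1
    have e1 : (1 : ZMod n) - 1 = 0 := by ring
    rw [e1, hγ0, hγ1]
    by_cases hk3 : 2 < k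
    · have : γ (1 + 1) = 1 := by
        show (if ((1:ZMod n)+1).val < k then 1 else 0) = 1
        norm_num [show (1:ZMod n)+1 = 2 by ring, hv2, hk3]
      rw [this]
      exact (P.rev 1 1 1 true).mp hswp
    · have : γ (1 + 1) = 0 := by
        show (if ((1:ZMod n)+1).val < k then 1 else 0) = 0
        norm_num [show (1:ZMod n)+1 = 2 by ring, hv2]
        omega
      rw [this]
      exact (P.rev 0 1 1 true).mp hin
  · intro j hj
    have hj0 : j = 0 := by by_contra h; simp [h] at hj
    subst hj0
    have e1 : (0 : ZMod n) - 1 = -1 := by ring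
    rw [e1, hγm1, hγ0, show (0:ZMod n)+1 = 1 by ring, hγ1]
    exact hin
  · intro j
    by_cases hj0 : j = 0
    · subst hj0
      simp [hγ0, h10.symm, show (0:ZMod n)+1 = 1 by ring,
        show (0:ZMod n)-1 = -1 by ring, hm10]
    · by_cases hj1 : j = 1
      · subst hj1
        simp [hγ1, h10, show (1:ZMod n)+1 = 2 by ring, h21,
          show (1:ZMod n)-1 = 0 by ring]
      · have ha : j + 1 ≠ 1 := fun h => hj0 (by
          have := add_right_cancel (b := (1:ZMod n)) (by simpa using h); simpa using this)
        have hb : j - 1 ≠ 0 := fun h => hj1 (by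
          have : j = 1 := by linear_combination h
          exact this)
        simp [hj0, hj1, ha, hb]
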